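/- Let (A•, ∂, ∂_J) be as above, satisfying the ∂∂_J-lemma. Then the natural projection p : (A• ∩ ker ∂_J, ∂) → (H•_{∂_J}, ∂) onto ∂_J-cohomology (with induced differential ∂) induces an isomorphism on ∂-cohomology. -/
import Mathlib


/-- **Lemma 4.3.** Let `(A•, ∂, ∂_J)` be a complex with two anticommuting degree-1
differentials satisfying the `∂∂_J`-lemma. Then the natural projection
`p : (A• ∩ ker ∂_J, ∂) → (H•_{∂_J}, ∂)` onto `∂_J`-cohomology (with the induced
differential `∂ [α] = [∂α]`) induces an isomorphism on `∂`-cohomology, stated here by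
unfolding injectivity and surjectivity of the induced map. -/
theorem projection_to_delJ_cohomology_quasi_iso
    {V : Type*} [AddCommGroup V] [Module ℂ V]
    (del delJ : Module.End ℂ V)
    (hd2 : del * del = 0) (hdJ2 : delJ * delJ = 0)
    (hanti : del * delJ + delJ * del = 0)
    (hlemma : ∀ α : V, del α = 0 → delJ α = 0 → (∃ β γ : V, α = del β + delJ γ) →
      ∃ η : V, α = del (delJ η)) :
    -- injectivity of H(p): if α ∈ ker ∂_J is ∂-closed and its class maps to a
    -- ∂-exact class in (H_{∂_J}, ∂), then α is ∂-exact within ker ∂_J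
    (∀ α : V, delJ α = 0 → del α = 0 →
      (∃ β γ : V, delJ β = 0 ∧ α = del β + delJ γ) →
      ∃ β' : V, delJ β' = 0 ∧ α = del β') ∧
    -- surjectivity of H(p): every class in H_{∂_J} killed by the induced ∂ is, up to
    -- the induced ∂-exact and ∂_J-exact terms, represented by α ∈ ker ∂_J ∩ ker ∂
    (∀ α : V, delJ α = 0 → (∃ γ : V, del α = delJ γ) →
      ∃ β μ ν : V, delJ β = 0 ∧ del β = 0 ∧ delJ μ = 0 ∧ α = β + del μ + delJ ν) := by
  constructor
  · rintro α hJα hdα ⟨β, γ, hJβ, hαβγ⟩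
    obtain ⟨η, hη⟩ := hlemma α hdα hJα ⟨β, γ, hαβγ⟩
    refine ⟨delJ η, ?_, hη⟩
    have := congrFun (congrArg DFunLike.coe hdJ2) η
    simpa [Module.End.mul_apply] using this
  · rintro α hJα ⟨γ, hγ⟩
    have hdd : del (del α) = 0 := by
      have := congrFun (congrArg DFunLike.coe hd2) α
      simpa [Module.End.mul_apply] using this
    have hJd : delJ (del α) = 0 := by
      have := congrFun (congrArg DFunLike.coe hanti) α
      simp [Module.End.mul_apply, hJα] at this
      exact this
    obtain ⟨η, hη⟩ := hlemma (del α) hdd hJd ⟨0, γ, by simpa using hγ⟩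
    refine ⟨α - delJ η, 0, η, ?_, ?_, by simp, by simp⟩
    · have := congrFun (congrArg DFunLike.coe hdJ2) η
      simp [Module.End.mul_apply] at this
      simp [map_sub, hJα, this]
    · simp [map_sub, ← hη]
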